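/- For every clustering C of V and every vertex u ∈ V, the positive-side fractional cost satisfies S^+ := Σ_{v ∈ N_u^+} d_uv ≤ 3 · max_{z ∈ V} y_C(z). In particular, taking C to be an optimal clustering, S^+ ≤ 3 · OPT. -/

import Mathlib

open Finset

/-- Positive neighborhood of `u`. -/
def Np {V : Type*} [Fintype V] (pos : V → V → Bool) (u : V) : Finset V :=
  Finset.univ.filter (fun v => pos u v)

/-- Negative neighborhood of `u`. -/
def Nm {V : Type*} [Fintype V] (pos : V → V → Bool) (u : V) : Finset V :=
  Finset.univ.filter (fun v => ¬ pos u v)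

/-- The correlation metric. -/
noncomputable def corrDist {V : Type*} [Fintype V] [DecidableEq V]
    (pos : V → V → Bool) (u v : V) : ℝ :=
  1 - ((Np pos u ∩ Np pos v).card : ℝ) /
      ((Fintype.card V : ℝ) - ((Nm pos u ∩ Nm pos v).card : ℝ))

/-- Number of disagreements incident to `u` under the clustering `C`. -/
def yC {V : Type*} [Fintype V] [DecidableEq V] (pos : V → V → Bool) (C : V → ℕ) (u : V) : ℕ :=
  (Finset.univ.filter (fun v => v ≠ u ∧
    ((pos u v ∧ C u ≠ C v) ∨ (¬ (pos u v) ∧ C u = C v)))).card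

/-- Optimal value of the Min Max correlation clustering objective. -/
noncomputable def OPT {V : Type*} [Fintype V] [DecidableEq V] (pos : V → V → Bool) : ℕ :=
  sInf { k : ℕ | ∃ C : V → ℕ, k = Finset.univ.sup (yC pos C) }

/-- `d̂`. -/
noncomputable def dhat {V : Type*} [Fintype V] [DecidableEq V]
    (pos : V → V → Bool) (u v : V) : ℝ :=
  if pos u v then corrDist pos u v else 1 - corrDist pos u v

/-- number of samples. -/
noncomputable def mSample (V : Type*) [Fintype V] (ε : ℝ) : ℕ :=
  ⌈(32 / ε ^ 2) * Real.log (Fintype.card V)⌉₊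

/-- Sample space: one subset of `N_u^+` of size `min m |N_u^+|` per vertex `u`. -/
abbrev SampleSpace {V : Type*} [Fintype V] [DecidableEq V]
    (pos : V → V → Bool) (m : ℕ) : Type _ :=
  ∀ u : V, {s : Finset V // s ⊆ Np pos u ∧ s.card = min m (Np pos u).card}

/-- Uniform probability of an event over a finite sample space. -/
noncomputable def prob {Ω : Type*} [Fintype Ω] (E : Set Ω) : ℝ :=
  (E.ncard : ℝ) / (Fintype.card Ω : ℝ)

noncomputable def West {V : Type*} [Fintype V] [DecidableEq V]
    (pos : V → V → Bool) {m : ℕ} (ω : SampleSpace pos m) (u v : V) : ℝ :=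
  if m ≤ (Np pos u).card then
    ((Np pos u).card : ℝ) / m * (((ω u).1 ∩ Np pos v).card : ℝ)
  else ((Np pos u ∩ Np pos v).card : ℝ)

noncomputable def Yest {V : Type*} [Fintype V] [DecidableEq V]
    (pos : V → V → Bool) {m : ℕ} (ω : SampleSpace pos m) (u v : V) : ℝ :=
  if m ≤ (Np pos u).card then
    ((Np pos u).card : ℝ) / m * (((ω u).1 ∩ Nm pos v).card : ℝ)
  else ((Np pos u ∩ Nm pos v).card : ℝ)

/-- Initial estimate of the correlation metric for a pair labeled with `|N_v^+| ≥ |N_u^+|`. -/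
noncomputable def dbar {V : Type*} [Fintype V] [DecidableEq V]
    (pos : V → V → Bool) {m : ℕ} (ω : SampleSpace pos m) (u v : V) : ℝ :=
  (Yest pos ω u v + Yest pos ω v u) / (((Np pos u).card : ℝ) + Yest pos ω v u)

/-- Initial estimate, with the pair relabeled so the vertex with larger
positive neighborhood comes second. -/
noncomputable def dbarS {V : Type*} [Fintype V] [DecidableEq V]
    (pos : V → V → Bool) {m : ℕ} (ω : SampleSpace pos m) (u v : V) : ℝ :=
  if (Np pos u).card ≤ (Np pos v).card then dbar pos ω u v else dbar pos ω v u

noncomputable def cc1 (ε : ℝ) : ℝ := (1 + ε) / (1 - ε)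
noncomputable def hh1 (ε : ℝ) : ℝ := 2 * ε / (1 - ε)
noncomputable def cc2 (ε : ℝ) : ℝ := (1 + ε) / (1 - ε)
noncomputable def hh2 (ε : ℝ) : ℝ := 2 * ε / (1 - ε)
noncomputable def cc3 (ε : ℝ) : ℝ := ((1 + ε) / (1 - ε)) ^ 2
noncomputable def hh3 (ε : ℝ) : ℝ := (2 * ε / (1 - ε)) * (1 + 2 * (1 + ε) / (1 - ε))
noncomputable def cc4 (ε : ℝ) : ℝ := (2 * cc3 ε + 1) * cc3 ε
noncomputable def hh4 (ε : ℝ) : ℝ := (4 * cc3 ε + 1) * (2 * cc3 ε + 1) * hh3 ε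
noncomputable def DD (ε : ℝ) : ℝ := 2 * cc3 ε

/-- Post-processed estimate. -/
noncomputable def dtilde {V : Type*} [Fintype V] [DecidableEq V] (ε : ℝ)
    (pos : V → V → Bool) {m : ℕ} (ω : SampleSpace pos m) (u v : V) : ℝ :=
  if pos u v ∧ dbarS pos ω u v ≤ 2 * hh3 ε then 0
  else if ¬ (pos u v) ∧ 1 / (2 * cc3 ε + 1) ≤ dbarS pos ω u v then 1
  else dbarS pos ω u v

/-- The radius `r(δ₁, δ₂)` from Appendix B. -/
noncomputable def rr (δ1 δ2 : ℝ) : ℝ :=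
  (1 - δ2 - δ1 * δ2 - δ1 ^ 2 * δ2 - δ1 ^ 3 * δ2) /
    (δ1 ^ 2 + δ1 ^ 3 * (δ1 + 1) + δ1 + 1)

noncomputable def c1const (δ1 δ2 : ℝ) : ℝ := δ1 + δ2 / rr δ1 δ2
noncomputable def bconst (δ1 δ2 : ℝ) : ℝ := (c1const δ1 δ2 + 1) * δ1 + δ2 / rr δ1 δ2
noncomputable def c2const (δ1 δ2 : ℝ) : ℝ := δ1 * (bconst δ1 δ2 + 1) + δ2 / rr δ1 δ2

section Aux
variable {V : Type*} [Fintype V] [DecidableEq V] (pos : V → V → Bool)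

lemma npnm_card (u v : V) :
    (Np pos u ∩ Np pos v).card + (Np pos u ∩ Nm pos v).card = (Np pos u).card := by
  classical
  have h1 : Np pos u ∩ Np pos v = (Np pos u).filter (fun w => pos v w) := by
    ext w; simp [Np, Nm, and_comm]
  have h2 : Np pos u ∩ Nm pos v = (Np pos u).filter (fun w => ¬ pos v w) := by
    ext w; simp [Np, Nm, and_comm]
  rw [h1, h2, Finset.card_filter_add_card_filter_not]

lemma nmnp_card (u v : V) :
    (Nm pos u ∩ Np pos v).card + (Nm pos u ∩ Nm pos v).card = (Nm pos u).card := by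
  classical
  have h1 : Nm pos u ∩ Np pos v = (Nm pos u).filter (fun w => pos v w) := by
    ext w; simp [Np, Nm, and_comm]
  have h2 : Nm pos u ∩ Nm pos v = (Nm pos u).filter (fun w => ¬ pos v w) := by
    ext w; simp [Np, Nm, and_comm]
  rw [h1, h2, Finset.card_filter_add_card_filter_not]

lemma np_nm_card (u : V) : (Np pos u).card + (Nm pos u).card = Fintype.card V := by
  classical
  rw [Np, Nm, Finset.card_filter_add_card_filter_not, Finset.card_univ]

lemma total_card (u v : V) :
    ((Np pos u ∩ Np pos v).card + (Np pos u ∩ Nm pos v).card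
      + (Nm pos u ∩ Np pos v).card) + (Nm pos u ∩ Nm pos v).card = Fintype.card V := by
  have := npnm_card pos u v
  have := nmnp_card pos u v
  have := np_nm_card pos u
  omega

end Aux
section Main
variable {V : Type*} [Fintype V] [DecidableEq V] (pos : V → V → Bool)

lemma mem_np_self (hrefl : ∀ u, pos u u = true) (u : V) : u ∈ Np pos u := by
  simp [Np, hrefl u]

/-- numerator bound for a same-cluster pair -/
lemma num_bound (hrefl : ∀ u, pos u u = true) (C : V → ℕ) (u v : V)
    (hC : C v = C u) :
    (Np pos u ∩ Nm pos v).card + (Nm pos u ∩ Np pos v).card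
      ≤ yC pos C u + yC pos C v := by
  classical
  set A := Np pos u ∩ Nm pos v with hA
  set B := Nm pos u ∩ Np pos v with hB
  have hAsplit := Finset.card_filter_add_card_filter_not
    (s := A) (p := fun w => C w = C u)
  have hBsplit := Finset.card_filter_add_card_filter_not
    (s := B) (p := fun w => C w = C u)
  -- S1 ⊆ disagreement set at u
  have hdisj1 : Disjoint (A.filter (fun w => ¬ C w = C u)) (B.filter (fun w => C w = C u)) := by
    rw [Finset.disjoint_left]; intro w hw hw'
    simp only [Finset.mem_filter, hA, hB, Np, Nm, Finset.mem_inter, Finset.mem_univ, true_and] at hw hw'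
    tauto
  have hdisj2 : Disjoint (A.filter (fun w => C w = C u)) (B.filter (fun w => ¬ C w = C u)) := by
    rw [Finset.disjoint_left]; intro w hw hw'
    simp only [Finset.mem_filter, hA, hB, Np, Nm, Finset.mem_inter, Finset.mem_univ, true_and] at hw hw'
    tauto
  have hsub1 : (A.filter (fun w => ¬ C w = C u)) ∪ (B.filter (fun w => C w = C u))
      ⊆ Finset.univ.filter (fun w => w ≠ u ∧
        ((pos u w ∧ C u ≠ C w) ∨ (¬ (pos u w) ∧ C u = C w))) := by
    intro w hw
    simp only [Finset.mem_union, Finset.mem_filter, hA, hB, Np, Nm,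
      Finset.mem_inter, Finset.mem_univ, true_and] at hw ⊢
    rcases hw with ⟨⟨⟨hp, _⟩, hne⟩⟩ | ⟨⟨⟨hnp, _⟩, heq⟩⟩
    · exact ⟨fun h => hne (by rw [h]), Or.inl ⟨hp, fun h => hne h.symm⟩⟩
    · refine ⟨fun h => hnp (by rw [h]; exact (hrefl u)), Or.inr ⟨hnp, heq.symm⟩⟩
  have hsub2 : (A.filter (fun w => C w = C u)) ∪ (B.filter (fun w => ¬ C w = C u))
      ⊆ Finset.univ.filter (fun w => w ≠ v ∧
        ((pos v w ∧ C v ≠ C w) ∨ (¬ (pos v w) ∧ C v = C w))) := by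
    intro w hw
    simp only [Finset.mem_union, Finset.mem_filter, hA, hB, Np, Nm,
      Finset.mem_inter, Finset.mem_univ, true_and] at hw ⊢
    rcases hw with ⟨⟨⟨_, hnv⟩, heq⟩⟩ | ⟨⟨⟨_, hpv⟩, hne⟩⟩
    · exact ⟨fun h => hnv (by rw [h]; exact (hrefl v)), Or.inr ⟨hnv, by rw [hC]; exact heq.symm⟩⟩
    · exact ⟨fun h => hne (by rw [h, hC]), Or.inl ⟨hpv, by rw [hC]; exact fun h => hne h.symm⟩⟩
  have h1 : (A.filter (fun w => ¬ C w = C u)).card + (B.filter (fun w => C w = C u)).card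
      ≤ yC pos C u := by
    rw [← Finset.card_union_of_disjoint hdisj1]
    exact Finset.card_le_card hsub1
  have h2 : (A.filter (fun w => C w = C u)).card + (B.filter (fun w => ¬ C w = C u)).card
      ≤ yC pos C v := by
    rw [← Finset.card_union_of_disjoint hdisj2]
    exact Finset.card_le_card hsub2
  omega

lemma corrDist_eq (hsymm : ∀ u v, pos u v = pos v u) (hrefl : ∀ u, pos u u = true)
    (u v : V) (hv : pos u v = true) :
    corrDist pos u v =
      (((Np pos u ∩ Nm pos v).card + (Nm pos u ∩ Np pos v).card : ℕ) : ℝ) /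
        (((Np pos u ∩ Np pos v).card + (Np pos u ∩ Nm pos v).card
          + (Nm pos u ∩ Np pos v).card : ℕ) : ℝ) := by
  have htot := total_card pos u v
  have hupos : u ∈ Np pos u ∩ Np pos v := by
    simp [Np, hrefl u, (hsymm u v) ▸ hv]
  have hDpos : 0 < ((Np pos u ∩ Np pos v).card + (Np pos u ∩ Nm pos v).card
      + (Nm pos u ∩ Np pos v).card : ℕ) := by
    have := Finset.card_pos.mpr ⟨u, hupos⟩; omega
  have hD : (Fintype.card V : ℝ) - ((Nm pos u ∩ Nm pos v).card : ℝ)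
      = (((Np pos u ∩ Np pos v).card + (Np pos u ∩ Nm pos v).card
          + (Nm pos u ∩ Np pos v).card : ℕ) : ℝ) := by
    have : (Fintype.card V : ℝ) = (((Np pos u ∩ Np pos v).card + (Np pos u ∩ Nm pos v).card
        + (Nm pos u ∩ Np pos v).card) + (Nm pos u ∩ Nm pos v).card : ℕ) := by
      exact_mod_cast congrArg (Nat.cast (R := ℝ)) htot.symm
    rw [this]; push_cast; ring
  rw [corrDist, hD]
  have hDpos' : (0:ℝ) < (((Np pos u ∩ Np pos v).card + (Np pos u ∩ Nm pos v).card
      + (Nm pos u ∩ Np pos v).card : ℕ) : ℝ) := by exact_mod_cast hDpos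
  rw [eq_comm, eq_sub_iff_add_eq, ← add_div, div_eq_one_iff_eq hDpos'.ne']
  push_cast; ring

end Main

/-- the positive-side fractional cost is at most `3 · max_z y_C(z)`,
and in particular at most `3 · OPT`. -/
theorem sum_plus_le
    {V : Type*} [Fintype V] [DecidableEq V] (pos : V → V → Bool)
    (hsymm : ∀ u v, pos u v = pos v u) (hrefl : ∀ u, pos u u = true)
    (u : V) :
    (∀ C : V → ℕ,
      (∑ v ∈ Np pos u, corrDist pos u v) ≤ 3 * ((Finset.univ.sup (yC pos C) : ℕ) : ℝ)) ∧
    (∑ v ∈ Np pos u, corrDist pos u v) ≤ 3 * (OPT pos : ℝ) := by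
  classical
  have key : ∀ C : V → ℕ,
      (∑ v ∈ Np pos u, corrDist pos u v) ≤ 3 * ((Finset.univ.sup (yC pos C) : ℕ) : ℝ) := by
    intro C
    set Y := Finset.univ.sup (yC pos C) with hY
    have hYu : yC pos C u ≤ Y := Finset.le_sup (Finset.mem_univ u)
    have hnpu_pos : 0 < (Np pos u).card := Finset.card_pos.mpr ⟨u, mem_np_self pos hrefl u⟩
    have hnpuR : (0:ℝ) < ((Np pos u).card : ℝ) := by exact_mod_cast hnpu_pos
    rw [← Finset.sum_filter_add_sum_filter_not (Np pos u) (fun v => C v = C u)]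
    have hPsum : ∑ v ∈ (Np pos u).filter (fun v => C v = C u), corrDist pos u v
        ≤ 2 * (Y:ℝ) := by
      have hP : ∀ v ∈ (Np pos u).filter (fun v => C v = C u),
          corrDist pos u v ≤ 2 * (Y:ℝ) / ((Np pos u).card : ℝ) := by
        intro v hv
        rw [Finset.mem_filter] at hv
        obtain ⟨hvN, hvC⟩ := hv
        have hpos : pos u v = true := by simpa [Np] using hvN
        rw [corrDist_eq pos hsymm hrefl u v hpos]
        have hYv : yC pos C v ≤ Y := Finset.le_sup (Finset.mem_univ v)
        have hnb := num_bound pos hrefl C u v hvC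
        have hnum : (((Np pos u ∩ Nm pos v).card + (Nm pos u ∩ Np pos v).card : ℕ) : ℝ)
            ≤ 2 * (Y:ℝ) := by
          have : (Np pos u ∩ Nm pos v).card + (Nm pos u ∩ Np pos v).card ≤ 2 * Y := by omega
          exact_mod_cast this
        have hDen : ((Np pos u).card : ℝ)
            ≤ (((Np pos u ∩ Np pos v).card + (Np pos u ∩ Nm pos v).card
              + (Nm pos u ∩ Np pos v).card : ℕ) : ℝ) := by
          have h := npnm_card pos u v
          have : (Np pos u).card ≤ (Np pos u ∩ Np pos v).card + (Np pos u ∩ Nm pos v).card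
              + (Nm pos u ∩ Np pos v).card := by omega
          exact_mod_cast this
        exact div_le_div₀ (by positivity) hnum hnpuR hDen
      calc ∑ v ∈ (Np pos u).filter (fun v => C v = C u), corrDist pos u v
          ≤ ((Np pos u).filter (fun v => C v = C u)).card
              • (2 * (Y:ℝ) / ((Np pos u).card : ℝ)) := Finset.sum_le_card_nsmul _ _ _ hP
        _ = (((Np pos u).filter (fun v => C v = C u)).card : ℝ)
              * (2 * (Y:ℝ) / ((Np pos u).card : ℝ)) := by rw [nsmul_eq_mul]
        _ ≤ ((Np pos u).card : ℝ) * (2 * (Y:ℝ) / ((Np pos u).card : ℝ)) := by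
              apply mul_le_mul_of_nonneg_right
              · exact_mod_cast Finset.card_filter_le _ _
              · positivity
        _ = 2 * (Y:ℝ) := by field_simp
    have hQsum : ∑ v ∈ (Np pos u).filter (fun v => ¬ C v = C u), corrDist pos u v
        ≤ (Y:ℝ) := by
      have hQ1 : ∀ v ∈ (Np pos u).filter (fun v => ¬ C v = C u), corrDist pos u v ≤ 1 := by
        intro v hv
        rw [Finset.mem_filter] at hv
        have hpos : pos u v = true := by simpa [Np] using hv.1
        rw [corrDist_eq pos hsymm hrefl u v hpos]
        have hupos : u ∈ Np pos u ∩ Np pos v := by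
          simp [Np, hrefl u, (hsymm u v) ▸ hpos]
        have hDpos : 0 < (Np pos u ∩ Np pos v).card := Finset.card_pos.mpr ⟨u, hupos⟩
        rw [div_le_one (by exact_mod_cast Nat.lt_of_lt_of_le hDpos (by omega))]
        have : (Np pos u ∩ Nm pos v).card + (Nm pos u ∩ Np pos v).card
            ≤ (Np pos u ∩ Np pos v).card + (Np pos u ∩ Nm pos v).card
              + (Nm pos u ∩ Np pos v).card := by omega
        exact_mod_cast this
      have hQcard : ((Np pos u).filter (fun v => ¬ C v = C u)).card ≤ yC pos C u := by
        apply Finset.card_le_card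
        intro v hv
        rw [Finset.mem_filter] at hv ⊢
        have hpos : pos u v = true := by simpa [Np] using hv.1
        refine ⟨Finset.mem_univ v, fun h => hv.2 (by rw [h]), Or.inl ⟨hpos, fun h => hv.2 h.symm⟩⟩
      calc ∑ v ∈ (Np pos u).filter (fun v => ¬ C v = C u), corrDist pos u v
          ≤ ((Np pos u).filter (fun v => ¬ C v = C u)).card • (1:ℝ) :=
            Finset.sum_le_card_nsmul _ _ _ hQ1
        _ = (((Np pos u).filter (fun v => ¬ C v = C u)).card : ℝ) := by rw [nsmul_eq_mul, mul_one]
        _ ≤ (Y:ℝ) := by exact_mod_cast Nat.le_trans hQcard hYu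
    linarith
  refine ⟨key, ?_⟩
  have hne : { k : ℕ | ∃ C : V → ℕ, k = Finset.univ.sup (yC pos C) }.Nonempty :=
    ⟨Finset.univ.sup (yC pos (fun _ => 0)), fun _ => 0, rfl⟩
  obtain ⟨C, hC⟩ := Nat.sInf_mem hne
  rw [OPT, hC]
  exact key C
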